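/- Let A ∈ ℝ^{n×d}, W ∈ ℝ^{d×m}, and define F̃(S) = ‖AW‖²_F - min_{W̃} ‖AW - B_S W̃‖²_F for B ∈ ℝ^{n×d}. For any S ⊆ {1,...,d} and i ∉ S with r := b_i - proj_S(b_i) ≠ 0, the marginal gain satisfies F̃({i}|S) = ‖(AW)ᵀ (r/‖r‖)‖². Consequently, min_{‖z‖=1} ‖(AW)ᵀ z‖² ≤ F̃({i}|S) ≤ max_{‖z‖=1} ‖(AW)ᵀ z‖², i.e., every nonzero marginal gain lies between the smallest and largest squared singular values of AW. -/

import Mathlib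

/-- Squared Frobenius norm. -/
noncomputable def frobSq {n m : ℕ} (M : Matrix (Fin n) (Fin m) ℝ) : ℝ :=
  ∑ p, ∑ q, (M p q) ^ 2

/-- Zero out the columns of `B` outside `S`. -/
def colZero {n d : ℕ} (B : Matrix (Fin n) (Fin d) ℝ) (S : Finset (Fin d)) :
    Matrix (Fin n) (Fin d) ℝ :=
  Matrix.of fun p j => if j ∈ S then B p j else 0

/-- `F̃ S = ‖AW‖²_F - min_{W̃} ‖AW - B_S W̃‖²_F`. -/
noncomputable def Ftil {n d m : ℕ} (A B : Matrix (Fin n) (Fin d) ℝ)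
    (W : Matrix (Fin d) (Fin m) ℝ) (S : Finset (Fin d)) : ℝ :=
  frobSq (A * W) -
    sInf {e : ℝ | ∃ Wt : Matrix (Fin d) (Fin m) ℝ, e = frobSq (A * W - colZero B S * Wt)}

open scoped RealInnerProductSpace

namespace Stmt13Aux

variable {n d m : ℕ}

noncomputable def colB (B : Matrix (Fin n) (Fin d) ℝ) (j : Fin d) : EuclideanSpace ℝ (Fin n) :=
  WithLp.toLp 2 fun p => B p j

noncomputable def colM (M : Matrix (Fin n) (Fin m) ℝ) (q : Fin m) : EuclideanSpace ℝ (Fin n) :=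
  WithLp.toLp 2 fun p => M p q

noncomputable def spanS (B : Matrix (Fin n) (Fin d) ℝ) (S : Finset (Fin d)) :
    Submodule ℝ (EuclideanSpace ℝ (Fin n)) :=
  Submodule.span ℝ (Set.range fun j : {j // j ∈ S} => colB B j)

lemma normSq (v : EuclideanSpace ℝ (Fin n)) : ‖v‖ ^ 2 = ∑ p, v p ^ 2 := by
  rw [EuclideanSpace.norm_sq_eq]
  simp [sq_abs]

lemma innerSum (v w : EuclideanSpace ℝ (Fin n)) : ⟪v, w⟫ = ∑ p, v p * w p := by
  simp [PiLp.inner_apply, RCLike.inner_apply, mul_comm]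

lemma sum_mem_spanS (B : Matrix (Fin n) (Fin d) ℝ) (S : Finset (Fin d)) (f : Fin d → ℝ)
    (hf : ∀ j ∉ S, f j = 0) :
    (WithLp.toLp 2 (fun p => ∑ j, f j * B p j) : EuclideanSpace ℝ (Fin n)) ∈ spanS B S := by
  rw [spanS, Submodule.mem_span_range_iff_exists_fun]
  refine ⟨fun j => f j, ?_⟩
  ext p
  calc (∑ j : {j // j ∈ S}, f j • colB B j) p
      = ∑ j : {j // j ∈ S}, (f j • colB B j) p := by rw [WithLp.ofLp_sum]; exact Finset.sum_apply p _ _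
    _ = ∑ j : {j // j ∈ S}, f (j : Fin d) * B p j := Finset.sum_congr rfl fun j _ => rfl
    _ = ∑ j ∈ S, f j * B p j := by
        rw [Finset.univ_eq_attach, Finset.sum_attach S (fun j => f j * B p j)]
    _ = ∑ j, f j * B p j := by
        apply Finset.sum_subset (Finset.subset_univ S)
        intro j _ hj
        simp [hf j hj]

/-- Every element of `spanS B S` is of the form `p ↦ ∑ j, f j * B p j` with `f` supported on `S`. -/
lemma spanS_rep (B : Matrix (Fin n) (Fin d) ℝ) (S : Finset (Fin d))
    {v : EuclideanSpace ℝ (Fin n)} (hv : v ∈ spanS B S) :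
    ∃ f : Fin d → ℝ, (∀ j ∉ S, f j = 0) ∧
      v = (WithLp.toLp 2 (fun p => ∑ j, f j * B p j) : EuclideanSpace ℝ (Fin n)) := by
  rw [spanS, Submodule.mem_span_range_iff_exists_fun] at hv
  obtain ⟨c, hc⟩ := hv
  classical
  refine ⟨fun j => if h : j ∈ S then c ⟨j, h⟩ else 0, fun j hj => dif_neg hj, ?_⟩
  rw [← hc]
  ext p
  calc (∑ j : {j // j ∈ S}, c j • colB B j) p
      = ∑ j : {j // j ∈ S}, (c j • colB B j) p := by rw [WithLp.ofLp_sum]; exact Finset.sum_apply p _ _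
    _ = ∑ j : {j // j ∈ S}, (if h : (j : Fin d) ∈ S then c ⟨j, h⟩ else 0) * B p j :=
        Finset.sum_congr rfl fun j _ => by rw [dif_pos j.2]; rfl
    _ = ∑ j ∈ S, (if h : j ∈ S then c ⟨j, h⟩ else 0) * B p j := by
        rw [Finset.univ_eq_attach,
          Finset.sum_attach S (fun j => (if h : j ∈ S then c ⟨j, h⟩ else 0) * B p j)]
    _ = ∑ j, (if h : j ∈ S then c ⟨j, h⟩ else 0) * B p j := by
        apply Finset.sum_subset (Finset.subset_univ S)
        intro j _ hj
        rw [dif_neg hj, zero_mul]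

lemma inner_eq_zero_of_forall_gen (v : EuclideanSpace ℝ (Fin n))
    (s : Set (EuclideanSpace ℝ (Fin n))) (h : ∀ w ∈ s, ⟪v, w⟫ = 0) :
    ∀ w ∈ Submodule.span ℝ s, ⟪v, w⟫ = 0 := by
  intro w hw
  have hle : Submodule.span ℝ s ≤ LinearMap.ker (innerSL ℝ v : EuclideanSpace ℝ (Fin n) →ₗ[ℝ] ℝ) :=
    Submodule.span_le.mpr fun w hw => LinearMap.mem_ker.mpr (by simpa [innerSL_apply_apply] using h w hw)
  exact LinearMap.mem_ker.mp (hle hw)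

lemma orthogonalProjection_inner_eq_zero {K : Submodule ℝ (EuclideanSpace ℝ (Fin n))}
    (v w : EuclideanSpace ℝ (Fin n)) (hw : w ∈ K) :
    ⟪v - (K.orthogonalProjectionOnto v : EuclideanSpace ℝ (Fin n)), w⟫ = 0 :=
  K.starProjection_inner_eq_zero v w hw

lemma eq_orthogonalProjection_of_mem_of_inner_eq_zero {K : Submodule ℝ (EuclideanSpace ℝ (Fin n))}
    {u v : EuclideanSpace ℝ (Fin n)} (hvm : v ∈ K) (hvo : ∀ w ∈ K, ⟪u - v, w⟫ = 0) :
    (K.orthogonalProjectionOnto u : EuclideanSpace ℝ (Fin n)) = v :=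
  K.eq_starProjection_of_mem_of_inner_eq_zero hvm hvo

lemma proj_min (K : Submodule ℝ (EuclideanSpace ℝ (Fin n))) (c : EuclideanSpace ℝ (Fin n))
    {v : EuclideanSpace ℝ (Fin n)} (hv : v ∈ K) :
    ‖c - (Submodule.orthogonalProjection K c : EuclideanSpace ℝ (Fin n))‖ ^ 2 ≤ ‖c - v‖ ^ 2 := by
  set Pc := (Submodule.orthogonalProjection K c : EuclideanSpace ℝ (Fin n)) with hPc
  have h : c - v = (c - Pc) + (Pc - v) := by abel
  rw [h, norm_add_sq_real,
    orthogonalProjection_inner_eq_zero c _ (Submodule.sub_mem K (Submodule.orthogonalProjection K c).2 hv)]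
  nlinarith [sq_nonneg ‖Pc - v‖, norm_nonneg (Pc - v)]

lemma frob_cols_sub (M N : Matrix (Fin n) (Fin m) ℝ) :
    frobSq (M - N) = ∑ q, ‖colM M q - colM N q‖ ^ 2 := by
  rw [frobSq, Finset.sum_comm]
  refine Finset.sum_congr rfl fun q _ => ?_
  rw [normSq]
  exact Finset.sum_congr rfl fun p _ => rfl

lemma colM_mul (B : Matrix (Fin n) (Fin d) ℝ) (S : Finset (Fin d))
    (Wt : Matrix (Fin d) (Fin m) ℝ) (q : Fin m) :
    colM (colZero B S * Wt) q
      = (WithLp.toLp 2 (fun p => ∑ j, (if j ∈ S then Wt j q else 0) * B p j) : EuclideanSpace ℝ (Fin n)) := by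
  ext p
  show (colZero B S * Wt) p q = _
  rw [Matrix.mul_apply]
  refine Finset.sum_congr rfl fun j _ => ?_
  by_cases h : j ∈ S <;> simp [colZero, h, mul_comm]

lemma isLeast_proj (M : Matrix (Fin n) (Fin m) ℝ) (B : Matrix (Fin n) (Fin d) ℝ)
    (S : Finset (Fin d)) :
    IsLeast {e : ℝ | ∃ Wt : Matrix (Fin d) (Fin m) ℝ, e = frobSq (M - colZero B S * Wt)}
      (∑ q, ‖colM M q -
        (Submodule.orthogonalProjection (spanS B S) (colM M q) : EuclideanSpace ℝ (Fin n))‖ ^ 2) := by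
  classical
  have hcolmem : ∀ (Wt : Matrix (Fin d) (Fin m) ℝ) (q : Fin m),
      colM (colZero B S * Wt) q ∈ spanS B S := by
    intro Wt q
    rw [colM_mul]
    exact sum_mem_spanS B S _ (fun j hj => if_neg hj)
  constructor
  · -- the minimum is attained
    choose f hf0 hf using fun q =>
      spanS_rep B S (Submodule.orthogonalProjection (spanS B S) (colM M q)).2
    refine ⟨Matrix.of fun j q => f q j, ?_⟩
    rw [frob_cols_sub]
    refine Finset.sum_congr rfl fun q _ => ?_
    simp only [colM_mul, Matrix.of_apply]
    have h2 : (WithLp.toLp 2 (fun p => ∑ j, (if j ∈ S then f q j else 0) * B p j) : EuclideanSpace ℝ (Fin n))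
        = (WithLp.toLp 2 (fun p => ∑ j, f q j * B p j) : EuclideanSpace ℝ (Fin n)) := by
      ext p
      simp only [WithLp.ofLp_toLp]
      refine Finset.sum_congr rfl fun j _ => ?_
      by_cases h : j ∈ S
      · rw [if_pos h]
      · rw [if_neg h, hf0 q j h]
    rw [h2, ← hf q]
  · rintro e ⟨Wt, rfl⟩
    rw [frob_cols_sub]
    exact Finset.sum_le_sum fun q _ => proj_min _ _ (hcolmem Wt q)

lemma Ftil_eq (A B : Matrix (Fin n) (Fin d) ℝ) (W : Matrix (Fin d) (Fin m) ℝ)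
    (S : Finset (Fin d)) :
    Ftil A B W S = frobSq (A * W) - ∑ q, ‖colM (A * W) q -
        (Submodule.orthogonalProjection (spanS B S) (colM (A * W) q) : EuclideanSpace ℝ (Fin n))‖ ^ 2 := by
  rw [Ftil, (isLeast_proj (A * W) B S).csInf_eq]

end Stmt13Aux

set_option maxHeartbeats 1000000 in
open Stmt13Aux in
/-- When the residual `r = b_i - proj_S(b_i)` is nonzero, the marginal gain
equals `‖(AW)ᵀ (r/‖r‖)‖²` and hence lies between the smallest and the largest
squared singular values of `AW`. -/
theorem stmt13 {n d m : ℕ} (A B : Matrix (Fin n) (Fin d) ℝ)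
    (W : Matrix (Fin d) (Fin m) ℝ)
    (S : Finset (Fin d)) (i : Fin d) (hi : i ∉ S)
    (x : Fin d → ℝ) (hx0 : ∀ j ∉ S, x j = 0)
    (hx : ∀ x' : Fin d → ℝ, (∀ j ∉ S, x' j = 0) →
      ∑ p, (B p i - B.mulVec x p) ^ 2 ≤ ∑ p, (B p i - B.mulVec x' p) ^ 2)
    (hr : (fun p => B p i - B.mulVec x p) ≠ 0) :
    Ftil A B W (insert i S) - Ftil A B W S =
      (∑ q, (∑ p, (A * W) p q *
        ((B p i - B.mulVec x p) / Real.sqrt (∑ p', (B p' i - B.mulVec x p') ^ 2))) ^ 2) ∧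
    sInf {e : ℝ | ∃ z : Fin n → ℝ, (∑ p, z p ^ 2) = 1 ∧
        e = ∑ q, (∑ p, (A * W) p q * z p) ^ 2} ≤
      Ftil A B W (insert i S) - Ftil A B W S ∧
    Ftil A B W (insert i S) - Ftil A B W S ≤
      sSup {e : ℝ | ∃ z : Fin n → ℝ, (∑ p, z p ^ 2) = 1 ∧
        e = ∑ q, (∑ p, (A * W) p q * z p) ^ 2} := by
  classical
  set r : EuclideanSpace ℝ (Fin n) := (WithLp.toLp 2 (fun p => B p i - B.mulVec x p) : EuclideanSpace ℝ (Fin n))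
    with hrdef
  have hr0 : r ≠ 0 := by rw [hrdef]; exact fun h => hr (congrArg WithLp.ofLp h)
  have hnr : (0:ℝ) < ‖r‖ := norm_pos_iff.mpr hr0
  have hsqrt : Real.sqrt (∑ p', (B p' i - B.mulVec x p') ^ 2) = ‖r‖ := by
    have h1 : (∑ p', (B p' i - B.mulVec x p') ^ 2) = ‖r‖ ^ 2 := (normSq r).symm
    rw [h1, Real.sqrt_sq (norm_nonneg r)]
  set u : EuclideanSpace ℝ (Fin n) := ‖r‖⁻¹ • r with hudef
  have hu1 : ‖u‖ = 1 := norm_smul_inv_norm hr0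
  have huu : ⟪u, u⟫ = 1 := by rw [real_inner_self_eq_norm_sq, hu1, one_pow]
  have hup : ∀ p, u p = (B p i - B.mulVec x p)
      / Real.sqrt (∑ p', (B p' i - B.mulVec x p') ^ 2) := by
    intro p
    rw [hsqrt, div_eq_inv_mul]
    rfl
  -- `r` is orthogonal to the columns indexed by `S`
  have hrb : ∀ j ∈ S, ⟪r, colB B j⟫ = 0 := by
    intro j hj
    have hinner : ⟪r, colB B j⟫ = ∑ p, r p * B p j := innerSum r (colB B j)
    have hsum : ∀ t : ℝ, ∑ p, (r p) ^ 2 ≤ ∑ p, (r p - t * B p j) ^ 2 := by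
      intro t
      have hsupp : ∀ k ∉ S, (x + t • (Pi.single j 1 : Fin d → ℝ)) k = 0 := by
        intro k hk
        have hkj : k ≠ j := fun h => hk (h ▸ hj)
        simp [hx0 k hk, Pi.single_apply, hkj]
      have h2 : ∀ p, B.mulVec (x + t • (Pi.single j 1 : Fin d → ℝ)) p = B.mulVec x p + t * B p j := by
        intro p
        have hterm : ∀ k, B p k * ((x + t • (Pi.single j 1 : Fin d → ℝ)) k)
            = B p k * x k + t * (if k = j then B p k else 0) := by
          intro k
          by_cases h : k = j <;> simp [h, Pi.single_apply] <;> ring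
        calc B.mulVec (x + t • (Pi.single j 1 : Fin d → ℝ)) p
            = ∑ k, B p k * ((x + t • (Pi.single j 1 : Fin d → ℝ)) k) := rfl
          _ = ∑ k, (B p k * x k + t * (if k = j then B p k else 0)) :=
              Finset.sum_congr rfl fun k _ => hterm k
          _ = B.mulVec x p + t * B p j := by
              rw [Finset.sum_add_distrib, ← Finset.mul_sum, Finset.sum_ite_eq']
              simp [Matrix.mulVec, dotProduct]
      calc ∑ p, (r p) ^ 2
          ≤ ∑ p, (B p i - B.mulVec (x + t • (Pi.single j 1 : Fin d → ℝ)) p) ^ 2 :=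
            hx (x + t • (Pi.single j 1 : Fin d → ℝ)) hsupp
        _ = ∑ p, (r p - t * B p j) ^ 2 := by
            refine Finset.sum_congr rfl fun p _ => ?_
            rw [h2 p]
            show (B p i - (B.mulVec x p + t * B p j)) ^ 2
              = ((B p i - B.mulVec x p) - t * B p j) ^ 2
            ring
    have key : ∀ t : ℝ, 0 ≤ t ^ 2 * (∑ p, (B p j) ^ 2)
        - 2 * t * (∑ p, r p * B p j) := by
      intro t
      have hexp : ∑ p, (r p - t * B p j) ^ 2
          = (∑ p, (r p) ^ 2) - 2 * t * (∑ p, r p * B p j)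
            + t ^ 2 * (∑ p, (B p j) ^ 2) := by
        rw [Finset.sum_congr rfl (fun p _ =>
          (by ring : (r p - t * B p j) ^ 2
            = (r p) ^ 2 - 2 * t * (r p * B p j) + t ^ 2 * (B p j) ^ 2))]
        rw [Finset.sum_add_distrib, Finset.sum_sub_distrib, ← Finset.mul_sum, ← Finset.mul_sum]
      have h3 := hsum t
      rw [hexp] at h3
      linarith
    rw [hinner]
    set a := ∑ p, r p * B p j with ha
    set cc := ∑ p, (B p j) ^ 2 with hcc
    have hccn : (0:ℝ) ≤ cc := Finset.sum_nonneg fun p _ => sq_nonneg _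
    have hp1 : (0:ℝ) < cc + 1 := by linarith
    have h0 := key (a / (cc + 1))
    have heq : (a / (cc+1)) ^ 2 * cc - 2 * (a / (cc+1)) * a
        = (a ^ 2 * cc - 2 * a ^ 2 * (cc + 1)) / (cc + 1) ^ 2 := by
      field_simp
    rw [heq] at h0
    have h2 : 0 ≤ a ^ 2 * cc - 2 * a ^ 2 * (cc + 1) := by
      by_contra hlt
      push_neg at hlt
      have : (a ^ 2 * cc - 2 * a ^ 2 * (cc + 1)) / (cc + 1) ^ 2 < 0 :=
        div_neg_of_neg_of_pos hlt (by positivity)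
      linarith
    have ha2 : a ^ 2 = 0 := le_antisymm (by nlinarith) (sq_nonneg a)
    exact sq_eq_zero_iff.mp ha2
  have hrK : ∀ w ∈ spanS B S, ⟪r, w⟫ = 0 := by
    intro w hw
    exact inner_eq_zero_of_forall_gen r _
      (fun w' hw' => by obtain ⟨j, rfl⟩ := hw'; exact hrb j j.2) w hw
  have huK : ∀ w ∈ spanS B S, ⟪u, w⟫ = 0 := by
    intro w hw
    rw [hudef, real_inner_smul_left, hrK w hw, mul_zero]
  set Bx : EuclideanSpace ℝ (Fin n) := (WithLp.toLp 2 (fun p => B.mulVec x p) : EuclideanSpace ℝ (Fin n))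
    with hBxdef
  have hBx : Bx ∈ spanS B S := by
    have hfun : Bx = (WithLp.toLp 2 (fun p => ∑ j, x j * B p j) : EuclideanSpace ℝ (Fin n)) := by
      ext p
      show ∑ k, B p k * x k = ∑ j, x j * B p j
      exact Finset.sum_congr rfl fun k _ => mul_comm _ _
    rw [hfun]
    exact sum_mem_spanS B S x hx0
  have hKK' : spanS B S ≤ spanS B (insert i S) := by
    apply Submodule.span_le.mpr
    rintro w ⟨j, rfl⟩
    exact Submodule.subset_span ⟨⟨j.1, Finset.mem_insert_of_mem j.2⟩, rfl⟩
  have hbiK' : colB B i ∈ spanS B (insert i S) :=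
    Submodule.subset_span ⟨⟨i, Finset.mem_insert_self i S⟩, rfl⟩
  have hrsplit : colB B i = r + Bx := by
    ext p
    show B p i = (B p i - B.mulVec x p) + B.mulVec x p
    ring
  have hrK' : r ∈ spanS B (insert i S) := by
    have : r = colB B i - Bx := by rw [hrsplit]; abel
    rw [this]
    exact Submodule.sub_mem _ hbiK' (hKK' hBx)
  have huK' : u ∈ spanS B (insert i S) := by
    rw [hudef]; exact Submodule.smul_mem _ _ hrK'
  have hru : r = ‖r‖ • u := by
    rw [hudef, smul_smul, mul_inv_cancel₀ (ne_of_gt hnr), one_smul]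
  -- the residual of the augmented projection is orthogonal to `u`
  have hw0 : ∀ c : EuclideanSpace ℝ (Fin n),
      ⟪c - ((Submodule.orthogonalProjection (spanS B S) c : EuclideanSpace ℝ (Fin n)) + ⟪c, u⟫ • u), u⟫
        = 0 := by
    intro c
    have h3 : ⟪(Submodule.orthogonalProjection (spanS B S) c : EuclideanSpace ℝ (Fin n)), u⟫ = 0 := by
      rw [real_inner_comm]
      exact huK _ (Submodule.orthogonalProjection (spanS B S) c).2
    rw [sub_add_eq_sub_sub, inner_sub_left, inner_sub_left, real_inner_smul_left, huu, h3]
    ring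
  -- formula for the projection onto the augmented span
  have hproj : ∀ q : Fin m,
      (Submodule.orthogonalProjection (spanS B (insert i S)) (colM (A * W) q) : EuclideanSpace ℝ (Fin n))
        = (Submodule.orthogonalProjection (spanS B S) (colM (A * W) q) : EuclideanSpace ℝ (Fin n))
          + ⟪colM (A * W) q, u⟫ • u := by
    intro q
    set c := colM (A * W) q with hc
    apply eq_orthogonalProjection_of_mem_of_inner_eq_zero
    · exact Submodule.add_mem _ (hKK' (Submodule.orthogonalProjection (spanS B S) c).2)
        (Submodule.smul_mem _ _ huK')
    · intro w hw
      refine inner_eq_zero_of_forall_gen _ _ ?_ w hw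
      rintro w' ⟨j, rfl⟩
      beta_reduce
      have hKzero : ∀ v ∈ spanS B S,
          ⟪c - ((Submodule.orthogonalProjection (spanS B S) c : EuclideanSpace ℝ (Fin n))
            + ⟪c, u⟫ • u), v⟫ = 0 := by
        intro v hv
        rw [sub_add_eq_sub_sub, inner_sub_left,
          orthogonalProjection_inner_eq_zero c v hv, real_inner_smul_left, huK v hv,
          mul_zero, sub_zero]
      by_cases hjS : (j : Fin d) ∈ S
      · exact hKzero _ (Submodule.subset_span ⟨⟨j.1, hjS⟩, rfl⟩)
      · have hji : (j : Fin d) = i := by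
          have hj2 := j.2
          rw [Finset.mem_insert] at hj2
          tauto
        have hcolj : colB B (j : Fin d) = r + Bx := by rw [hji, hrsplit]
        rw [hcolj, inner_add_right]
        have hru0 : ⟪c - ((Submodule.orthogonalProjection (spanS B S) c : EuclideanSpace ℝ (Fin n))
            + ⟪c, u⟫ • u), r⟫ = 0 := by
          rw [hru, real_inner_smul_right, hw0 c, mul_zero]
        rw [hru0, hKzero Bx hBx, add_zero]
  -- per-column gain
  have hcol : ∀ q : Fin m,
      ‖colM (A * W) q
          - (Submodule.orthogonalProjection (spanS B S) (colM (A * W) q) : EuclideanSpace ℝ (Fin n))‖ ^ 2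
        - ‖colM (A * W) q - (Submodule.orthogonalProjection (spanS B (insert i S)) (colM (A * W) q) :
            EuclideanSpace ℝ (Fin n))‖ ^ 2
        = ⟪colM (A * W) q, u⟫ ^ 2 := by
    intro q
    rw [hproj q]
    set c := colM (A * W) q with hc
    set Pc := (Submodule.orthogonalProjection (spanS B S) c : EuclideanSpace ℝ (Fin n)) with hPc
    set t := ⟪c, u⟫ with ht
    have hsplit : c - Pc = (c - (Pc + t • u)) + t • u := by abel
    have hz : ⟪c - (Pc + t • u), t • u⟫ = 0 := by
      have h4 := hw0 c
      rw [← ht] at h4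
      rw [real_inner_smul_right]
      rw [← hPc] at h4
      rw [h4, mul_zero]
    have hnorm : ‖t • u‖ ^ 2 = t ^ 2 := by
      rw [norm_smul, hu1, mul_one, Real.norm_eq_abs, sq_abs]
    rw [hsplit, norm_add_sq_real, hz, hnorm]
    ring
  -- the gain formula
  have hFt : Ftil A B W (insert i S) - Ftil A B W S = ∑ q, ⟪colM (A * W) q, u⟫ ^ 2 := by
    rw [Ftil_eq A B W (insert i S), Ftil_eq A B W S]
    have h := Finset.sum_congr rfl fun q (_ : q ∈ Finset.univ) => hcol q
    rw [Finset.sum_sub_distrib] at h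
    linarith
  have hinner : ∀ q : Fin m, ⟪colM (A * W) q, u⟫
      = ∑ p, (A * W) p q * ((B p i - B.mulVec x p)
          / Real.sqrt (∑ p', (B p' i - B.mulVec x p') ^ 2)) := by
    intro q
    have h5 : ⟪colM (A * W) q, u⟫ = ∑ p, (A * W) p q * u p := innerSum _ _
    rw [h5]
    exact Finset.sum_congr rfl fun p _ => by rw [hup p]
  have hmain : Ftil A B W (insert i S) - Ftil A B W S =
      ∑ q, (∑ p, (A * W) p q *
        ((B p i - B.mulVec x p) / Real.sqrt (∑ p', (B p' i - B.mulVec x p') ^ 2))) ^ 2 := by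
    rw [hFt]
    exact Finset.sum_congr rfl fun q _ => by rw [hinner q]
  refine ⟨hmain, ?_, ?_⟩
  · -- lower bound via sInf
    apply csInf_le
    · exact ⟨0, by rintro e ⟨z, hz, rfl⟩; positivity⟩
    · refine ⟨u, ?_, ?_⟩
      · rw [← normSq, hu1, one_pow]
      · rw [hFt]
        refine Finset.sum_congr rfl fun q _ => ?_
        have h5 : ⟪colM (A * W) q, u⟫ = ∑ p, (A * W) p q * u p := innerSum _ _
        rw [h5]
  · -- upper bound via sSup
    apply le_csSup
    · refine ⟨frobSq (A * W), ?_⟩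
      rintro e ⟨z, hz1, rfl⟩
      calc ∑ q, (∑ p, (A * W) p q * z p) ^ 2
          ≤ ∑ q, (∑ p, ((A * W) p q) ^ 2) * (∑ p, z p ^ 2) :=
            Finset.sum_le_sum fun q _ => Finset.sum_mul_sq_le_sq_mul_sq _ _ _
        _ = ∑ q, ∑ p, ((A * W) p q) ^ 2 := by simp [hz1]
        _ = frobSq (A * W) := by rw [frobSq]; exact Finset.sum_comm
    · refine ⟨u, ?_, ?_⟩
      · rw [← normSq, hu1, one_pow]
      · rw [hFt]
        refine Finset.sum_congr rfl fun q _ => ?_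
        have h5 : ⟪colM (A * W) q, u⟫ = ∑ p, (A * W) p q * u p := innerSum _ _
        rw [h5]
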